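/- Let Z be a real n×k matrix and X a real n×p matrix, and fix a cluster g. Suppose ZᵀZ is invertible and I_{n_g} − Z_{[g]}(ZᵀZ)^{-1}Z_{[g]}ᵀ is invertible, and set Π̂ = (ZᵀZ)^{-1}ZᵀX. Then ZᵀZ − Z_{[g]}ᵀZ_{[g]} is invertible and (ZᵀZ − Z_{[g]}ᵀZ_{[g]})^{-1}(ZᵀX − Z_{[g]}ᵀX_{[g]}) = Π̂ − (ZᵀZ)^{-1} Z_{[g]}ᵀ (I_{n_g} − Z_{[g]}(ZᵀZ)^{-1}Z_{[g]}ᵀ)^{-1} (X_{[g]} − Z_{[g]}Π̂). -/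

import Mathlib

open Matrix BigOperators

/-- Index set of `n = n₁ + … + n_G` observations, grouped into `G` clusters. -/

lemma wood_right {n m : Type*} [Fintype n] [Fintype m] [DecidableEq n] [DecidableEq m]
    (A B : Matrix n n ℝ) (U : Matrix n m ℝ) (V : Matrix m n ℝ) (T : Matrix m m ℝ)
    (hAB : A * B = 1) (hT1 : (1 - V * B * U) * T = 1) :
    (A - U * V) * (B + B * U * T * V * B) = 1 := by
  have h1 : V * B * U * T = T - 1 := by
    rw [sub_mul, one_mul, sub_eq_iff_eq_add] at hT1
    rw [eq_sub_iff_add_eq]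
    conv_rhs => rw [hT1]
    abel
  calc (A - U * V) * (B + B * U * T * V * B)
      = A * B + (A * B) * (U * T * V * B) - U * (V * B)
          - U * ((V * B * U * T) * (V * B)) := by
        simp only [Matrix.sub_mul, Matrix.mul_sub, Matrix.mul_add, Matrix.add_mul,
          Matrix.mul_assoc]
        abel
    _ = 1 + 1 * (U * T * V * B) - U * (V * B) - U * ((T - 1) * (V * B)) := by
        rw [hAB, h1]
    _ = 1 := by
        simp only [Matrix.sub_mul, Matrix.mul_sub, Matrix.mul_add, Matrix.add_mul,
          Matrix.mul_assoc, Matrix.one_mul, Matrix.mul_one]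
        abel

lemma wood_main {n m q : Type*} [Fintype n] [Fintype m] [Fintype q]
    [DecidableEq n] [DecidableEq m]
    (A B : Matrix n n ℝ) (U : Matrix n m ℝ) (V : Matrix m n ℝ) (T : Matrix m m ℝ)
    (W : Matrix n q ℝ) (Xg : Matrix m q ℝ) (P : Matrix n q ℝ)
    (hAB : A * B = 1) (hT1 : (1 - V * B * U) * T = 1) (hT2 : T * (1 - V * B * U) = 1)
    (hP : P = B * W) :
    IsUnit (A - U * V) ∧
      (A - U * V)⁻¹ * (W - U * Xg) = P - B * U * T * (Xg - V * P) := by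
  have key := wood_right A B U V T hAB hT1
  have hunit : IsUnit (A - U * V) := by
    rw [Matrix.isUnit_iff_isUnit_det]
    exact IsUnit.of_mul_eq_one _ (by rw [← Matrix.det_mul, key, Matrix.det_one])
  have hinv : (A - U * V)⁻¹ = B + B * U * T * V * B := Matrix.inv_eq_right_inv key
  refine ⟨hunit, ?_⟩
  have h2 : T * (V * B * U) = T - 1 := by
    rw [mul_sub, mul_one, sub_eq_iff_eq_add] at hT2
    rw [eq_sub_iff_add_eq]
    conv_rhs => rw [hT2]
    abel
  rw [hinv]
  calc (B + B * U * T * V * B) * (W - U * Xg)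
      = B * W + B * (U * (T * (V * (B * W)))) - B * (U * Xg)
          - B * (U * ((T * (V * B * U)) * Xg)) := by
        simp only [Matrix.sub_mul, Matrix.mul_sub, Matrix.mul_add, Matrix.add_mul,
          Matrix.mul_assoc]
        abel
    _ = P + B * (U * (T * (V * P))) - B * (U * Xg) - B * (U * ((T - 1) * Xg)) := by
        rw [← hP, h2]
    _ = P - B * U * T * (Xg - V * P) := by
        simp only [Matrix.sub_mul, Matrix.mul_sub, Matrix.mul_add, Matrix.add_mul,
          Matrix.mul_assoc, Matrix.one_mul, Matrix.mul_one]
        abel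

abbrev ClusterIdx {G : ℕ} (ng : Fin G → ℕ) := Σ g : Fin G, Fin (ng g)

/-- The `n_g × m` submatrix `A_{[g]}` of rows in cluster `g`. -/
def clusterRows {G : ℕ} {ng : Fin G → ℕ} {m : Type*}
    (A : Matrix (ClusterIdx ng) m ℝ) (g : Fin G) : Matrix (Fin (ng g)) m ℝ :=
  Matrix.of fun i j => A ⟨g, i⟩ j

/-- leave-cluster-out least squares via the Woodbury identity,
Appendix D: if `ZᵀZ` and `I_{n_g} − Z_{[g]}(ZᵀZ)⁻¹Z_{[g]}ᵀ` are invertible and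
`Π̂ = (ZᵀZ)⁻¹ZᵀX`, then `ZᵀZ − Z_{[g]}ᵀZ_{[g]}` is invertible and
`(ZᵀZ − Z_{[g]}ᵀZ_{[g]})⁻¹(ZᵀX − Z_{[g]}ᵀX_{[g]})
  = Π̂ − (ZᵀZ)⁻¹ Z_{[g]}ᵀ (I − Z_{[g]}(ZᵀZ)⁻¹Z_{[g]}ᵀ)⁻¹ (X_{[g]} − Z_{[g]}Π̂)`. -/
theorem leave_cluster_out_least_squares
    {G : ℕ} (ng : Fin G → ℕ) {k p : ℕ}
    (Z : Matrix (ClusterIdx ng) (Fin k) ℝ) (X : Matrix (ClusterIdx ng) (Fin p) ℝ)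
    (g : Fin G)
    (hZZ : IsUnit (Zᵀ * Z))
    (hI : IsUnit ((1 : Matrix (Fin (ng g)) (Fin (ng g)) ℝ) -
      clusterRows Z g * (Zᵀ * Z)⁻¹ * (clusterRows Z g)ᵀ))
    (Pihat : Matrix (Fin k) (Fin p) ℝ) (hPihat : Pihat = (Zᵀ * Z)⁻¹ * Zᵀ * X) :
    IsUnit (Zᵀ * Z - (clusterRows Z g)ᵀ * clusterRows Z g) ∧
    (Zᵀ * Z - (clusterRows Z g)ᵀ * clusterRows Z g)⁻¹ *
        (Zᵀ * X - (clusterRows Z g)ᵀ * clusterRows X g) =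
      Pihat - (Zᵀ * Z)⁻¹ * (clusterRows Z g)ᵀ *
        ((1 : Matrix (Fin (ng g)) (Fin (ng g)) ℝ) -
          clusterRows Z g * (Zᵀ * Z)⁻¹ * (clusterRows Z g)ᵀ)⁻¹ *
        (clusterRows X g - clusterRows Z g * Pihat) := by
  set A := Zᵀ * Z with hA
  set U := (clusterRows Z g)ᵀ with hU
  set V := clusterRows Z g with hV
  have hAB : A * A⁻¹ = 1 :=
    Matrix.mul_nonsing_inv _ ((Matrix.isUnit_iff_isUnit_det _).mp hZZ)
  have hS : (1 : Matrix (Fin (ng g)) (Fin (ng g)) ℝ) - V * A⁻¹ * U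
      = 1 - V * A⁻¹ * U := rfl
  have hSd : IsUnit ((1 : Matrix (Fin (ng g)) (Fin (ng g)) ℝ) - V * A⁻¹ * U).det :=
    (Matrix.isUnit_iff_isUnit_det _).mp hI
  have hT1 : ((1 : Matrix (Fin (ng g)) (Fin (ng g)) ℝ) - V * A⁻¹ * U) *
      (1 - V * A⁻¹ * U)⁻¹ = 1 := Matrix.mul_nonsing_inv _ hSd
  have hT2 : ((1 : Matrix (Fin (ng g)) (Fin (ng g)) ℝ) - V * A⁻¹ * U)⁻¹ *
      (1 - V * A⁻¹ * U) = 1 := Matrix.nonsing_inv_mul _ hSd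
  have hP : Pihat = A⁻¹ * (Zᵀ * X) := by rw [hPihat, Matrix.mul_assoc]
  have := wood_main A A⁻¹ U V (1 - V * A⁻¹ * U)⁻¹ (Zᵀ * X) (clusterRows X g) Pihat
    hAB (by rw [Matrix.mul_assoc] at hT1 ⊢; exact hT1)
    (by rw [Matrix.mul_assoc] at hT2 ⊢; exact hT2) hP
  simpa only [Matrix.mul_assoc] using this
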